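/- arXiv:2110.14148 — 3 statements merged into one kernel-verified Lean document; each statement's English description precedes it below -/
import Mathlib

section
/- Let C ⊆ ℝ^p be a convex set, θ ∈ ℝ^p, and suppose z ∈ C is a Bregman projection of θ onto C, i.e. d_φ(z, θ) ≤ d_φ(x, θ) for all x ∈ C. Then for every x ∈ C one has d_φ(x, θ) ≥ d_φ(x, z) + d_φ(z, θ). -/
open MeasureTheory ProbabilityTheory Real

/-- Bregman divergence generated by a differentiable function `φ`. -/
noncomputable def dphi {p : ℕ} (φ : EuclideanSpace ℝ (Fin p) → ℝ)
    (x y : EuclideanSpace ℝ (Fin p)) : ℝ :=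
  φ x - φ y - inner ℝ (gradient φ y) (x - y)

/-- **Obtuse angle property of Bregman projections.** If `z ∈ C` is a Bregman
projection of `θ` onto the convex set `C` (a minimizer over `C` of
`x ↦ d_φ(x, θ)`), then `d_φ(x, θ) ≥ d_φ(x, z) + d_φ(z, θ)` for all `x ∈ C`. -/
theorem bregman_obtuse_angle
    {p : ℕ} (hp : 0 < p)
    (φ : EuclideanSpace ℝ (Fin p) → ℝ)
    (hφconv : ConvexOn ℝ Set.univ φ) (hφdiff : Differentiable ℝ φ)
    (C : Set (EuclideanSpace ℝ (Fin p))) (hC : Convex ℝ C)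
    (θ z : EuclideanSpace ℝ (Fin p)) (hzC : z ∈ C)
    (hproj : ∀ x ∈ C, dphi φ z θ ≤ dphi φ x θ) :
    ∀ x ∈ C, dphi φ x z + dphi φ z θ ≤ dphi φ x θ := by
  intro x hx
  set v : EuclideanSpace ℝ (Fin p) := x - z with hv
  set Gθ : EuclideanSpace ℝ (Fin p) := gradient φ θ with hGθ
  set Gz : EuclideanSpace ℝ (Fin p) := gradient φ z with hGz
  have hgradz : (inner ℝ Gz v : ℝ) = fderiv ℝ φ z v := by
    rw [hGz, gradient, InnerProductSpace.toDual_symm_apply]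
  -- points on the segment are in C
  have hseg : ∀ t : ℝ, t ∈ Set.Icc (0:ℝ) 1 → z + t • v ∈ C := by
    intro t ht
    have h := hC hzC hx (by linarith [ht.2] : (0:ℝ) ≤ 1 - t) ht.1 (by ring)
    have heq : z + t • v = (1 - t) • z + t • x := by
      rw [hv]; rw [smul_sub, sub_smul, one_smul]; abel
    rw [heq]; exact h
  -- the function along the segment
  set h : ℝ → ℝ := fun t => dphi φ (z + t • v) θ with hh
  have hmin : ∀ t : ℝ, t ∈ Set.Icc (0:ℝ) 1 → h 0 ≤ h t := by
    intro t ht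
    have h0 : h 0 = dphi φ z θ := by simp [hh]
    rw [h0, hh]
    exact hproj _ (hseg t ht)
  -- derivative of h at 0
  have hpath : ∀ t : ℝ, HasDerivAt (fun s : ℝ => z + s • v) v t := by
    intro t
    simpa using ((hasDerivAt_id t).smul_const v).const_add z
  have hd : HasDerivAt h ((inner ℝ Gz v : ℝ) - inner ℝ Gθ v) 0 := by
    have h1 : HasDerivAt (fun t : ℝ => φ (z + t • v)) (fderiv ℝ φ z v) 0 := by
      have := (hφdiff (z + (0:ℝ) • v)).hasFDerivAt.comp_hasDerivAt 0 (hpath 0)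
      simpa [Function.comp_def] using this
    have h2 : HasDerivAt (fun t : ℝ => (inner ℝ Gθ (z + t • v - θ) : ℝ))
        ((inner ℝ Gθ v : ℝ)) 0 := by
      have hpath2 : HasDerivAt (fun s : ℝ => z + s • v - θ) v 0 :=
        (hpath 0).sub_const θ
      have := (innerSL ℝ Gθ).hasFDerivAt.comp_hasDerivAt 0 hpath2
      simpa [Function.comp_def] using this
    have := (h1.sub_const (φ θ)).sub h2
    rw [hgradz]
    exact this
  -- the derivative is nonneg (right-sided minimum)
  have hkey : (0:ℝ) ≤ (inner ℝ Gz v : ℝ) - inner ℝ Gθ v := by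
    have hslope : Filter.Tendsto (slope h 0) (nhdsWithin 0 (Set.Ioi 0))
        (nhds ((inner ℝ Gz v : ℝ) - inner ℝ Gθ v)) := by
      have := hasDerivAt_iff_tendsto_slope.mp hd
      exact this.mono_left (nhdsWithin_mono 0 (fun y hy => ne_of_gt hy))
    refine ge_of_tendsto hslope ?_
    filter_upwards [Ioc_mem_nhdsGT_of_mem (Set.mem_Ico.mpr ⟨le_refl 0, zero_lt_one⟩)]
      with t ht
    rw [slope_def_field]
    have := hmin t ⟨le_of_lt ht.1, ht.2⟩
    have htpos : (0:ℝ) < t - 0 := by simpa using ht.1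
    exact div_nonneg (by linarith) (le_of_lt htpos)
  -- conclude
  have hsplit : (inner ℝ Gθ (x - θ) : ℝ) = inner ℝ Gθ (x - z) + inner ℝ Gθ (z - θ) := by
    rw [← inner_add_right]
    congr 1
    abel
  simp only [dphi, ← hGθ, ← hGz, ← hv] at *
  linarith [hkey, hsplit]
end

section
/- Let Q be a Borel probability measure on ℝ^p with Q([−M,M]^p) = 1. Then for every Θ = (θ₁,…,θ_k) ∈ (ℝ^p)^k there exists Θ′ = (θ′₁,…,θ′_k) ∈ ([−M,M]^p)^k such that ∫ f_{Θ′} dQ ≤ ∫ f_Θ dQ (both integrals being finite); in fact one may take each θ′_j to be a Bregman projection of θ_j onto [−M,M]^p, i.e. a minimizer over [−M,M]^p of x ↦ d_φ(x, θ_j). -/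
open MeasureTheory ProbabilityTheory Real Filter
open scoped ENNReal

/-- The cube `[-M, M]^p` in `ℝ^p`. -/
def cube (p : ℕ) (M : ℝ) : Set (EuclideanSpace ℝ (Fin p)) := {x | ∀ i, |x i| ≤ M}

section Helpers

variable {p : ℕ} {φ : EuclideanSpace ℝ (Fin p) → ℝ} {M : ℝ}

lemma grad_inner_eq (hφ : Differentiable ℝ φ) (y v : EuclideanSpace ℝ (Fin p)) :
    (inner ℝ (gradient φ y) v : ℝ) = fderiv ℝ φ y v := by
  have h1 : HasFDerivAt φ ((InnerProductSpace.toDual ℝ _) (gradient φ y)) y :=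
    hasGradientAt_iff_hasFDerivAt.mp (hφ y).hasGradientAt
  rw [h1.fderiv, InnerProductSpace.toDual_apply_apply]

lemma dphi_nonneg (hconv : ConvexOn ℝ Set.univ φ) (hφ : Differentiable ℝ φ)
    (x y : EuclideanSpace ℝ (Fin p)) : 0 ≤ dphi φ x y := by
  set c : ℝ → EuclideanSpace ℝ (Fin p) := fun t => t • (x - y) + y with hc
  have hct : ∀ t, HasDerivAt c (x - y) t := fun t => by
    simpa [hc] using ((hasDerivAt_id t).smul_const (x - y)).add_const y
  have hh : HasDerivAt (fun t => φ (c t)) (fderiv ℝ φ (c 0) (x - y)) 0 :=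
    (hφ (c 0)).hasFDerivAt.comp_hasDerivAt 0 (hct 0)
  have hconvh : ConvexOn ℝ Set.univ (fun t => φ (c t)) := by
    have h := hconv.comp_affineMap (AffineMap.lineMap y x)
    have hfun : (φ ∘ ⇑(AffineMap.lineMap y x)) = fun t => φ (c t) := by
      funext t; simp [AffineMap.lineMap_apply, hc]
    rw [hfun] at h
    exact h
  have key := hconvh.le_slope_of_hasDerivAt (Set.mem_univ (0:ℝ)) (Set.mem_univ (1:ℝ))
    zero_lt_one hh
  have hc0 : c 0 = y := by simp [hc]
  have hc1 : c 1 = x := by simp [hc]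
  rw [slope_def_field] at key
  simp [hc0, hc1] at key
  have : (inner ℝ (gradient φ y) (x - y) : ℝ) = fderiv ℝ φ y (x - y) := grad_inner_eq hφ y _
  simp only [dphi, this]
  have hsub : (fderiv ℝ φ y) (x - y) = (fderiv ℝ φ y) x - (fderiv ℝ φ y) y := map_sub _ _ _
  linarith [key]

lemma cube_eq : cube p M = ⋂ i, (EuclideanSpace.proj i (𝕜 := ℝ)) ⁻¹' Set.Icc (-M) M := by
  ext x
  simp [cube, abs_le, Set.mem_iInter, forall_and]

lemma isClosed_cube : IsClosed (cube p M) := by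
  rw [cube_eq]
  exact isClosed_iInter fun i => isClosed_Icc.preimage (EuclideanSpace.proj i).continuous

lemma convex_cube : Convex ℝ (cube p M) := by
  rw [cube_eq]
  exact convex_iInter fun i => (convex_Icc _ _).linear_preimage (EuclideanSpace.projₗ i)

lemma isCompact_cube : IsCompact (cube p M) := by
  refine Metric.isCompact_of_isClosed_isBounded isClosed_cube ?_
  rw [isBounded_iff_forall_norm_le]
  refine ⟨Real.sqrt (p * M ^ 2), fun x hx => ?_⟩
  rw [EuclideanSpace.norm_eq]
  apply Real.sqrt_le_sqrt
  calc ∑ i, ‖x i‖ ^ 2 ≤ ∑ _i : Fin p, M ^ 2 := by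
        refine Finset.sum_le_sum fun i _ => ?_
        rw [Real.norm_eq_abs]
        exact pow_le_pow_left₀ (abs_nonneg _) (hx i) 2
    _ = p * M ^ 2 := by simp [mul_comm]

lemma zero_mem_cube (hM : 0 ≤ M) : (0 : EuclideanSpace ℝ (Fin p)) ∈ cube p M := by
  intro i
  simp [hM]

lemma dphi_pyth (hconv : ConvexOn ℝ Set.univ φ) (hφ : Differentiable ℝ φ)
    {θ a : EuclideanSpace ℝ (Fin p)} (ha : a ∈ cube p M)
    (hmin : IsMinOn (fun x => dphi φ x θ) (cube p M) a)
    {x : EuclideanSpace ℝ (Fin p)} (hx : x ∈ cube p M) :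
    dphi φ x a ≤ dphi φ x θ := by
  set v := gradient φ θ with hv
  set w := gradient φ a with hw
  have hseg : x - a ∈ posTangentConeAt (cube p M) a :=
    sub_mem_posTangentConeAt_of_segment_subset (convex_cube.segment_subset ha hx)
  have hglin : HasFDerivAt (fun y => dphi φ y θ) (fderiv ℝ φ a - innerSL ℝ v) a := by
    have h1 : HasFDerivAt (fun y : EuclideanSpace ℝ (Fin p) =>
        (φ y - φ θ) - ((inner ℝ v y : ℝ) - inner ℝ v θ)) (fderiv ℝ φ a - innerSL ℝ v) a :=
      ((hφ a).hasFDerivAt.sub_const (φ θ)).sub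
        ((innerSL ℝ v).hasFDerivAt.sub_const (inner ℝ v θ : ℝ))
    refine h1.congr_of_eventuallyEq (Filter.Eventually.of_forall fun y => ?_)
    simp only [dphi, inner_sub_right, ← hv]
  have hfo : 0 ≤ (fderiv ℝ φ a - innerSL ℝ v) (x - a) :=
    hmin.localize.hasFDerivWithinAt_nonneg hglin.hasFDerivWithinAt hseg
  have hinner : (fderiv ℝ φ a - innerSL ℝ v) (x - a)
      = (inner ℝ w (x - a) : ℝ) - (inner ℝ v (x - a) : ℝ) := by
    rw [ContinuousLinearMap.sub_apply, innerSL_apply_apply, ← grad_inner_eq hφ a, ← hw]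
  have h0 : 0 ≤ dphi φ a θ := dphi_nonneg hconv hφ a θ
  have halg : dphi φ x θ - dphi φ x a
      = dphi φ a θ + ((inner ℝ w (x - a) : ℝ) - (inner ℝ v (x - a) : ℝ)) := by
    simp only [dphi, ← hv, ← hw]
    have hxθ : x - θ = (x - a) + (a - θ) := by abel
    rw [hxθ, inner_add_right]
    ring
  rw [hinner] at hfo
  linarith

end Helpers

/-- The clustering objective `f_Θ(x) = Ψ(d_φ(x,θ₁),…,d_φ(x,θ_k))`. -/
noncomputable def fTheta {p k : ℕ} (φ : EuclideanSpace ℝ (Fin p) → ℝ)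
    (Ψ : (Fin k → ℝ) → ℝ) (Θ : Fin k → EuclideanSpace ℝ (Fin p))
    (x : EuclideanSpace ℝ (Fin p)) : ℝ :=
  Ψ (fun j => dphi φ x (Θ j))

/-- Restricting centroids to the cube can only decrease the population risk:
one may take each `θ'_j` to be a Bregman projection of `θ_j` onto `[-M,M]^p`. -/
theorem exists_cube_centroids_le
    {p k : ℕ} (hp : 0 < p) (hk : 0 < k) {M : ℝ} (hM : 0 < M)
    (φ : EuclideanSpace ℝ (Fin p) → ℝ)
    (hφconv : ConvexOn ℝ Set.univ φ) (hφdiff : Differentiable ℝ φ)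
    (hφzero : φ 0 = 0) (hgradzero : gradient φ 0 = 0)
    {H : ℝ} (hH : 0 ≤ H)
    (hgradlip : ∀ x ∈ cube p M, ∀ y ∈ cube p M,
      ‖gradient φ x - gradient φ y‖ ≤ H * ‖x - y‖)
    (Ψ : (Fin k → ℝ) → ℝ)
    (hΨnonneg : ∀ u : Fin k → ℝ, (∀ j, 0 ≤ u j) → 0 ≤ Ψ u)
    (hΨmono : ∀ u v : Fin k → ℝ, (∀ j, 0 ≤ u j) → (∀ j, u j ≤ v j) → Ψ u ≤ Ψ v)
    (hΨzero : Ψ 0 = 0)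
    {τ : ℝ} (hτ : 0 < τ)
    (hΨlip : ∀ u v : Fin k → ℝ, (∀ j, 0 ≤ u j) → (∀ j, 0 ≤ v j) →
      |Ψ u - Ψ v| ≤ τ * ∑ j, |u j - v j|)
    (Q : Measure (EuclideanSpace ℝ (Fin p))) [IsProbabilityMeasure Q]
    (hQ : Q (cube p M) = 1) :
    ∀ Θ : Fin k → EuclideanSpace ℝ (Fin p),
      ∃ Θ' : Fin k → EuclideanSpace ℝ (Fin p),
        (∀ j, Θ' j ∈ cube p M) ∧
        (∀ j, ∀ x ∈ cube p M, dphi φ (Θ' j) (Θ j) ≤ dphi φ x (Θ j)) ∧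
        Integrable (fTheta φ Ψ Θ') Q ∧ Integrable (fTheta φ Ψ Θ) Q ∧
        ∫ x, fTheta φ Ψ Θ' x ∂Q ≤ ∫ x, fTheta φ Ψ Θ x ∂Q := by
  intro Θ
  -- the nonnegative orthant
  set D : Set (Fin k → ℝ) := {u | ∀ j, 0 ≤ u j} with hD
  -- Ψ is continuous on D
  have hΨcont : ContinuousOn Ψ D := by
    have hlip : LipschitzOnWith (Real.toNNReal (τ * k)) Ψ D := by
      refine LipschitzOnWith.of_dist_le_mul fun u hu v hv => ?_
      rw [Real.dist_eq]
      calc |Ψ u - Ψ v| ≤ τ * ∑ j, |u j - v j| := hΨlip u v hu hv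
        _ ≤ τ * ∑ _j : Fin k, dist u v := by
            refine mul_le_mul_of_nonneg_left (Finset.sum_le_sum fun j _ => ?_) hτ.le
            rw [← Real.dist_eq]
            exact dist_le_pi_dist u v j
        _ = τ * k * dist u v := by
            rw [Finset.sum_const]
            simp [mul_assoc, mul_comm]
        _ ≤ Real.toNNReal (τ * k) * dist u v := by
            refine mul_le_mul_of_nonneg_right ?_ dist_nonneg
            exact Real.le_coe_toNNReal _
    exact hlip.continuousOn
  -- continuity of fTheta for any centers
  have hcont : ∀ T : Fin k → EuclideanSpace ℝ (Fin p), Continuous (fTheta φ Ψ T) := by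
    intro T
    have hu : Continuous fun x : EuclideanSpace ℝ (Fin p) => fun j => dphi φ x (T j) := by
      refine continuous_pi fun j => ?_
      unfold dphi
      refine ((hφdiff.continuous.sub continuous_const).sub ?_)
      exact Continuous.inner continuous_const (continuous_id.sub continuous_const)
    exact hΨcont.comp_continuous hu fun x j => dphi_nonneg hφconv hφdiff x (T j)
  -- a.e. membership in the cube
  have hae : ∀ᵐ x ∂Q, x ∈ cube p M := by
    have hcompl : Q (cube p M)ᶜ = 0 := by
      rw [measure_compl isClosed_cube.measurableSet (measure_ne_top Q _), hQ, measure_univ,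
        tsub_self]
    exact (ae_iff.2 hcompl)
  -- integrability for any centers
  have hint : ∀ T : Fin k → EuclideanSpace ℝ (Fin p), Integrable (fTheta φ Ψ T) Q := by
    intro T
    obtain ⟨C, hC⟩ := isCompact_cube.exists_bound_of_continuousOn (hcont T).continuousOn
    refine ⟨(hcont T).aestronglyMeasurable, HasFiniteIntegral.of_bounded (C := C) ?_⟩
    filter_upwards [hae] with x hx using hC x hx
  -- the Bregman projections
  have hex : ∀ j : Fin k, ∃ a ∈ cube p M,
      IsMinOn (fun x => dphi φ x (Θ j)) (cube p M) a := by
    intro j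
    refine isCompact_cube.exists_isMinOn ⟨0, zero_mem_cube hM.le⟩ ?_
    have : Continuous fun x : EuclideanSpace ℝ (Fin p) => dphi φ x (Θ j) := by
      unfold dphi
      refine ((hφdiff.continuous.sub continuous_const).sub ?_)
      exact Continuous.inner continuous_const (continuous_id.sub continuous_const)
    exact this.continuousOn
  choose Θ' hΘ'mem hΘ'min using hex
  refine ⟨Θ', hΘ'mem, fun j x hx => hΘ'min j hx, hint Θ', hint Θ, ?_⟩
  refine integral_mono_ae (hint Θ') (hint Θ) ?_
  filter_upwards [hae] with x hx
  exact hΨmono _ _ (fun j => dphi_nonneg hφconv hφdiff x (Θ' j))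
    (fun j => dphi_pyth hφconv hφdiff (hΘ'mem j) (hΘ'min j) hx)
end

section
/- For all Θ, Θ′ ∈ ([−M,M]^p)^k, sup over x ∈ [−M,M]^p of |f_Θ(x) − f_{Θ′}(x)| is at most 8 τ H_p M² k p; that is, the diameter in the supremum norm of the function class F = {f_Θ restricted to [−M,M]^p : Θ ∈ ([−M,M]^p)^k} is at most 8 τ H_p M² k p. -/
open MeasureTheory ProbabilityTheory Real Filter
open scoped ENNReal

lemma grad_first_order {p : ℕ} (φ : EuclideanSpace ℝ (Fin p) → ℝ)
    (hconv : ConvexOn ℝ Set.univ φ) (hdiff : Differentiable ℝ φ)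
    (x y : EuclideanSpace ℝ (Fin p)) :
    (inner ℝ (gradient φ y) (x - y) : ℝ) ≤ φ x - φ y := by
  set l : ℝ →ᵃ[ℝ] EuclideanSpace ℝ (Fin p) := AffineMap.lineMap y x
  have hg : ConvexOn ℝ (l ⁻¹' Set.univ) (φ ∘ l) := hconv.comp_affineMap l
  rw [Set.preimage_univ] at hg
  have hl : HasDerivAt (fun t : ℝ => l t) (x - y) 0 := by
    have h1 : HasDerivAt (fun t : ℝ => t • (x - y) + y) ((1:ℝ) • (x - y)) 0 :=
      ((hasDerivAt_id (0:ℝ)).smul_const (x - y)).add_const y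
    simpa [l, AffineMap.lineMap_apply, one_smul] using h1
  have hF : HasFDerivAt φ ((InnerProductSpace.toDual ℝ _) (gradient φ y)) (l 0) := by
    simpa [l] using hasGradientAt_iff_hasFDerivAt.mp (hdiff y).hasGradientAt
  have hd : HasDerivAt (φ ∘ l) (inner ℝ (gradient φ y) (x - y) : ℝ) 0 := by
    simpa using hF.comp_hasDerivAt 0 hl
  have := hg.le_slope_of_hasDerivAt (Set.mem_univ 0) (Set.mem_univ 1) one_pos hd
  rw [slope_def_field] at this
  simpa [l, Function.comp] using this

lemma norm_le_of_mem_cube {p : ℕ} {M : ℝ} (hM : 0 ≤ M)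
    {x : EuclideanSpace ℝ (Fin p)} (hx : x ∈ cube p M) :
    ‖x‖ ≤ M * Real.sqrt p := by
  rw [EuclideanSpace.norm_eq]
  have h1 : ∑ i, ‖x i‖ ^ 2 ≤ ∑ _i : Fin p, M ^ 2 := by
    apply Finset.sum_le_sum
    intro i _
    have := hx i
    rw [Real.norm_eq_abs]
    nlinarith [abs_nonneg (x i)]
  have h2 : Real.sqrt (∑ i, ‖x i‖ ^ 2) ≤ Real.sqrt (p * M ^ 2) := by
    apply Real.sqrt_le_sqrt
    simpa using h1
  refine h2.trans_eq ?_
  rw [Real.sqrt_mul (by positivity), Real.sqrt_sq hM]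
  ring

/-- Diameter bound in the supremum norm for the class
`F = {f_Θ : Θ ∈ ([-M,M]^p)^k}`: it is at most `8 τ H M² k p`. -/
theorem fTheta_diameter_bound
    {p k : ℕ} (hp : 0 < p) (hk : 0 < k) {M : ℝ} (hM : 0 < M)
    (φ : EuclideanSpace ℝ (Fin p) → ℝ)
    (hφconv : ConvexOn ℝ Set.univ φ) (hφdiff : Differentiable ℝ φ)
    (hφzero : φ 0 = 0) (hgradzero : gradient φ 0 = 0)
    {H : ℝ} (hH : 0 ≤ H)
    (hgradlip : ∀ x ∈ cube p M, ∀ y ∈ cube p M,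
      ‖gradient φ x - gradient φ y‖ ≤ H * ‖x - y‖)
    (Ψ : (Fin k → ℝ) → ℝ)
    (hΨnonneg : ∀ u : Fin k → ℝ, (∀ j, 0 ≤ u j) → 0 ≤ Ψ u)
    (hΨmono : ∀ u v : Fin k → ℝ, (∀ j, 0 ≤ u j) → (∀ j, u j ≤ v j) → Ψ u ≤ Ψ v)
    (hΨzero : Ψ 0 = 0)
    {τ : ℝ} (hτ : 0 < τ)
    (hΨlip : ∀ u v : Fin k → ℝ, (∀ j, 0 ≤ u j) → (∀ j, 0 ≤ v j) →
      |Ψ u - Ψ v| ≤ τ * ∑ j, |u j - v j|)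
    :
    ∀ Θ Θ' : Fin k → EuclideanSpace ℝ (Fin p),
      (∀ j, Θ j ∈ cube p M) → (∀ j, Θ' j ∈ cube p M) →
      ∀ x ∈ cube p M,
        |fTheta φ Ψ Θ x - fTheta φ Ψ Θ' x| ≤ 8 * τ * H * M ^ 2 * k * p := by
  intro Θ Θ' hΘ hΘ' x hx
  have h0cube : (0 : EuclideanSpace ℝ (Fin p)) ∈ cube p M := by
    intro i; simp [hM.le]
  -- nonnegativity of dphi
  have hd_nonneg : ∀ y z : EuclideanSpace ℝ (Fin p), 0 ≤ dphi φ y z := by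
    intro y z
    have := grad_first_order φ hφconv hφdiff y z
    unfold dphi; linarith
  -- gradient bound on cube
  have hgradbd : ∀ z ∈ cube p M, ‖gradient φ z‖ ≤ H * (M * Real.sqrt p) := by
    intro z hz
    have := hgradlip z hz 0 h0cube
    rw [hgradzero, sub_zero, sub_zero] at this
    exact this.trans (by
      have := norm_le_of_mem_cube hM.le hz
      nlinarith)
  have hsq : Real.sqrt p * Real.sqrt p = p := Real.mul_self_sqrt (Nat.cast_nonneg p)
  -- upper bound on dphi
  have hd_ub : ∀ z ∈ cube p M, dphi φ x z ≤ 3 * H * M ^ 2 * p := by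
    intro z hz
    -- φ x ≤ ⟨∇φ x, x⟩
    have h1 := grad_first_order φ hφconv hφdiff 0 x
    rw [hφzero, zero_sub] at h1
    have hxx : φ x ≤ (inner ℝ (gradient φ x) x : ℝ) := by
      have h2 : (inner ℝ (gradient φ x) (-x) : ℝ) = -(inner ℝ (gradient φ x) x : ℝ) :=
        inner_neg_right _ _
      simp only [zero_sub] at h1
      rw [h2] at h1; linarith
    have hφznn : 0 ≤ φ z := by
      have := hd_nonneg z 0
      simpa [dphi, hφzero, hgradzero] using this
    have hnx : ‖x‖ ≤ M * Real.sqrt p := norm_le_of_mem_cube hM.le hx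
    have hnz : ‖z‖ ≤ M * Real.sqrt p := norm_le_of_mem_cube hM.le hz
    have hφxle : φ x ≤ H * M ^ 2 * p := by
      have hc : (inner ℝ (gradient φ x) x : ℝ) ≤ ‖gradient φ x‖ * ‖x‖ := real_inner_le_norm _ _
      have hg := hgradbd x hx
      have : ‖gradient φ x‖ * ‖x‖ ≤ (H * (M * Real.sqrt p)) * (M * Real.sqrt p) := by
        apply mul_le_mul hg hnx (norm_nonneg _) (by positivity)
      have key : H * (M * Real.sqrt p) * (M * Real.sqrt p) = H * M ^ 2 * p := by
        linear_combination H * M ^ 2 * hsq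
      linarith
    have hinner : -(inner ℝ (gradient φ z) (x - z) : ℝ) ≤ 2 * H * M ^ 2 * p := by
      have hc : |(inner ℝ (gradient φ z) (x - z) : ℝ)| ≤ ‖gradient φ z‖ * ‖x - z‖ :=
        abs_real_inner_le_norm _ _
      have hg := hgradbd z hz
      have hnxz : ‖x - z‖ ≤ 2 * (M * Real.sqrt p) := by
        calc ‖x - z‖ ≤ ‖x‖ + ‖z‖ := norm_sub_le _ _
          _ ≤ 2 * (M * Real.sqrt p) := by linarith
      have h2 : ‖gradient φ z‖ * ‖x - z‖ ≤ (H * (M * Real.sqrt p)) * (2 * (M * Real.sqrt p)) :=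
        mul_le_mul hg hnxz (norm_nonneg _) (by positivity)
      have h3 := neg_abs_le (inner ℝ (gradient φ z) (x - z) : ℝ)
      have key : H * (M * Real.sqrt p) * (2 * (M * Real.sqrt p)) = 2 * H * M ^ 2 * p := by
        linear_combination 2 * H * M ^ 2 * hsq
      linarith
    unfold dphi
    nlinarith
  -- per-coordinate difference bound
  have hcoord : ∀ j, |dphi φ x (Θ j) - dphi φ x (Θ' j)| ≤ 3 * H * M ^ 2 * p := by
    intro j
    rw [abs_sub_le_iff]
    constructor
    · linarith [hd_ub (Θ j) (hΘ j), hd_nonneg x (Θ' j)]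
    · linarith [hd_ub (Θ' j) (hΘ' j), hd_nonneg x (Θ j)]
  have hlip := hΨlip (fun j => dphi φ x (Θ j)) (fun j => dphi φ x (Θ' j))
    (fun j => hd_nonneg x (Θ j)) (fun j => hd_nonneg x (Θ' j))
  have hsum : ∑ j, |dphi φ x (Θ j) - dphi φ x (Θ' j)| ≤ k * (3 * H * M ^ 2 * p) := by
    calc ∑ j, |dphi φ x (Θ j) - dphi φ x (Θ' j)|
        ≤ ∑ _j : Fin k, 3 * H * M ^ 2 * p := Finset.sum_le_sum fun j _ => hcoord j
      _ = k * (3 * H * M ^ 2 * p) := by simp [mul_comm]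
  unfold fTheta
  have : |Ψ (fun j => dphi φ x (Θ j)) - Ψ (fun j => dphi φ x (Θ' j))| ≤
      τ * (k * (3 * H * M ^ 2 * p)) := by
    refine hlip.trans ?_
    exact mul_le_mul_of_nonneg_left hsum hτ.le
  refine this.trans ?_
  have hknn : (0:ℝ) ≤ k := Nat.cast_nonneg k
  have hpnn : (0:ℝ) ≤ p := Nat.cast_nonneg p
  nlinarith [mul_nonneg (mul_nonneg (mul_nonneg (mul_nonneg hτ.le hH) (sq_nonneg M)) hknn) hpnn]
end
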